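/- For every k ≥ 1, with the genomes forming a single M-shaped path with k adjacencies in G1 (extremities x_1,…,x_{2k}, Π1 = {{x_{2t-1},x_{2t}} : 1 ≤ t ≤ k}, Π2 = {{x_{2t},x_{2t+1}} : 1 ≤ t ≤ k-1}), assign to each most parsimonious SCJ scenario the permutation π of {1,…,2k-1} where π_{2t-1} is the position in the scenario of the step cutting {x_{2t-1},x_{2t}} and π_{2t} is the position of the step joining {x_{2t},x_{2t+1}}. This assignment is a bijection between the set of most parsimonious SCJ scenarios from G1 to G2 and the set of alternating permutations of size 2k-1 (i.e., permutations π with π_{2t-1} < π_{2t} and π_{2t+1} < π_{2t} for all applicable t). -/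

import Mathlib

/-- A genome on an extremity type `V`: a finite set of adjacencies (unordered pairs of
distinct extremities) that are pairwise disjoint (a partial matching). -/
structure Genome (V : Type*) where
  adj : Finset (Sym2 V)
  not_isDiag : ∀ p ∈ adj, ¬ p.IsDiag
  disj : ∀ p ∈ adj, ∀ q ∈ adj, p ≠ q → ∀ x, x ∈ p → x ∉ q

instance {V : Type*} : Inhabited (Genome V) :=
  ⟨⟨∅, by simp, by simp⟩⟩

variable {V : Type*} [DecidableEq V]

/-- The step from `G` to `G'` is a cut removing the adjacency `p`. -/
def CutsAdj (G G' : Genome V) (p : Sym2 V) : Prop :=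
  p ∈ G.adj ∧ G'.adj = G.adj.erase p

/-- The step from `G` to `G'` is a join adding the adjacency `p`
(validity of `G'` forces `p` to be a pair of distinct, currently unmatched extremities). -/
def JoinsAdj (G G' : Genome V) (p : Sym2 V) : Prop :=
  p ∉ G.adj ∧ G'.adj = insert p G.adj

/-- A single SCJ operation. -/
def SCJStep (G G' : Genome V) : Prop :=
  ∃ p, CutsAdj G G' p ∨ JoinsAdj G G' p

/-- An SCJ scenario from `G1` to `G2`: a finite sequence of genomes starting at `G1`,
ending at `G2`, consecutive ones differing by a single SCJ operation.  A scenario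
represented by a list `L` has `L.length - 1` operations. -/
def IsScenario (G1 G2 : Genome V) (L : List (Genome V)) : Prop :=
  L.head? = some G1 ∧ L.getLast? = some G2 ∧ L.Chain' SCJStep

/-- The SCJ distance: the minimum number of operations in a scenario from `G1` to `G2`. -/
noncomputable def dSCJ (G1 G2 : Genome V) : ℕ :=
  sInf {n | ∃ L, IsScenario G1 G2 L ∧ L.length = n + 1}

/-- A most parsimonious SCJ scenario. -/
def IsMPS (G1 G2 : Genome V) (L : List (Genome V)) : Prop :=
  IsScenario G1 G2 L ∧ L.length = dSCJ G1 G2 + 1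

/-- The number of most parsimonious SCJ scenarios from `G1` to `G2`. -/
noncomputable def NumMPS (G1 G2 : Genome V) : ℕ :=
  {L | IsMPS G1 G2 L}.ncard

/-- The `i`-th step of the scenario `L` (steps indexed from `0`) cuts adjacency `p`. -/
def StepCut (L : List (Genome V)) (i : ℕ) (p : Sym2 V) : Prop :=
  i + 1 < L.length ∧ CutsAdj (L.getD i default) (L.getD (i + 1) default) p

/-- The `i`-th step of the scenario `L` (steps indexed from `0`) joins adjacency `p`. -/
def StepJoin (L : List (Genome V)) (i : ℕ) (p : Sym2 V) : Prop :=
  i + 1 < L.length ∧ JoinsAdj (L.getD i default) (L.getD (i + 1) default) p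

/-- `c` is an alternating (up-down) permutation:
`c 0 < c 1 > c 2 < c 3 > …` (i.e. in 1-based notation `c₁ < c₂ > c₃ < …`). -/
def IsAltPerm {n : ℕ} (c : Equiv.Perm (Fin n)) : Prop :=
  ∀ i : ℕ, ∀ h : i + 1 < n,
    if i % 2 = 0 then c ⟨i, by omega⟩ < c ⟨i + 1, h⟩
    else c ⟨i + 1, h⟩ < c ⟨i, by omega⟩

/-- `A n`, the number of alternating permutations of size `n` (with `A 0 = 1`). -/
noncomputable def altPermCount (n : ℕ) : ℕ :=
  Nat.card {c : Equiv.Perm (Fin n) // IsAltPerm c}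

/-- For the M-shaped path with `k` adjacencies in `G1`, the permutation `π` of
`{1, …, 2k-1}` is the one assigned to the scenario `L`: in 1-based notation,
`π (2t-1)` is the position of the step cutting `{2t-1, 2t}` (for `1 ≤ t ≤ k`) and
`π (2t)` is the position of the step joining `{2t, 2t+1}` (for `1 ≤ t ≤ k-1`).
(Here both the entries of `π` and scenario step positions are 0-based, so the 1-based
index `r ∈ {1, …, 2k-1}` corresponds to `r - 1 : Fin (2k-1)`.) -/
def ScenPerm (k : ℕ) (L : List (Genome ℕ)) (π : Equiv.Perm (Fin (2 * k - 1))) : Prop :=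
  (∀ t : ℕ, 1 ≤ t → t ≤ k → ∀ h : 2 * t - 2 < 2 * k - 1,
    StepCut L (π ⟨2 * t - 2, h⟩ : Fin (2 * k - 1)) s(2 * t - 1, 2 * t)) ∧
  (∀ t : ℕ, 1 ≤ t → t ≤ k - 1 → ∀ h : 2 * t - 1 < 2 * k - 1,
    StepJoin L (π ⟨2 * t - 1, h⟩ : Fin (2 * k - 1)) s(2 * t, 2 * t + 1))

-- ===== auxiliary development =====
namespace MShaped

theorem Genome.ext' {G G' : Genome V} (h : G.adj = G'.adj) : G = G' := by
  cases G; cases G'; simp_all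

theorem cut_eq {G G' : Genome V} {p q : Sym2 V} (h : CutsAdj G G' p) (h' : CutsAdj G G' q) :
    p = q := by
  by_contra hpq
  have : p ∈ G'.adj := by
    rw [h'.2, Finset.mem_erase]; exact ⟨hpq, h.1⟩
  rw [h.2, Finset.mem_erase] at this
  exact this.1 rfl

theorem join_eq {G G' : Genome V} {p q : Sym2 V} (h : JoinsAdj G G' p) (h' : JoinsAdj G G' q) :
    p = q := by
  by_contra hpq
  have : p ∈ insert q G.adj := by rw [← h'.2, h.2]; simp
  simp only [Finset.mem_insert] at this
  rcases this with h1 | h1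
  · exact hpq h1
  · exact h.1 h1

theorem not_cut_join {G G' : Genome V} {p q : Sym2 V} (h : CutsAdj G G' p) (h' : JoinsAdj G G' q) :
    False := by
  have h1 : G'.adj.card + 1 = G.adj.card := by
    rw [h.2]; exact Finset.card_erase_add_one h.1
  have h2 : G'.adj.card = G.adj.card + 1 := by
    rw [h'.2]; exact Finset.card_insert_of_notMem h'.1
  omega

-- symmDiff computations
theorem symmDiff_erase_of_mem {s t : Finset (Sym2 V)} {p : Sym2 V} (hs : p ∈ s) (ht : p ∉ t) :
    symmDiff (s.erase p) t = (symmDiff s t).erase p := by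
  ext q
  by_cases hq : q = p <;>
    simp_all [Finset.mem_symmDiff, Finset.mem_erase] <;> tauto

theorem symmDiff_erase_of_mem' {s t : Finset (Sym2 V)} {p : Sym2 V} (hs : p ∈ s) (ht : p ∈ t) :
    symmDiff (s.erase p) t = insert p (symmDiff s t) := by
  ext q
  by_cases hq : q = p <;>
    simp_all [Finset.mem_symmDiff, Finset.mem_erase, Finset.mem_insert] <;> tauto

theorem symmDiff_insert_of_mem {s t : Finset (Sym2 V)} {p : Sym2 V} (hs : p ∉ s) (ht : p ∈ t) :
    symmDiff (insert p s) t = (symmDiff s t).erase p := by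
  ext q
  by_cases hq : q = p <;>
    simp_all [Finset.mem_symmDiff, Finset.mem_erase, Finset.mem_insert] <;> tauto

theorem symmDiff_insert_of_not_mem {s t : Finset (Sym2 V)} {p : Sym2 V} (hs : p ∉ s) (ht : p ∉ t) :
    symmDiff (insert p s) t = insert p (symmDiff s t) := by
  ext q
  by_cases hq : q = p <;>
    simp_all [Finset.mem_symmDiff, Finset.mem_erase, Finset.mem_insert] <;> tauto

/-- one step changes the symmetric difference to the target by at most one. -/
theorem step_symmDiff {G G' : Genome V} (T : Finset (Sym2 V)) (h : SCJStep G G') :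
    (symmDiff G.adj T).card ≤ (symmDiff G'.adj T).card + 1 := by
  obtain ⟨p, hp | hp⟩ := h
  · rcases em (p ∈ T) with ht | ht
    · rw [hp.2, symmDiff_erase_of_mem' hp.1 ht,
        Finset.card_insert_of_notMem (by simp [Finset.mem_symmDiff, hp.1, ht])]
      omega
    · rw [hp.2, symmDiff_erase_of_mem hp.1 ht]
      have := Finset.card_erase_add_one (show p ∈ symmDiff G.adj T by
        simp [Finset.mem_symmDiff, hp.1, ht])
      omega
  · rcases em (p ∈ T) with ht | ht
    · rw [hp.2, symmDiff_insert_of_mem hp.1 ht]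
      have := Finset.card_erase_add_one (show p ∈ symmDiff G.adj T by
        simp [Finset.mem_symmDiff, hp.1, ht])
      omega
    · rw [hp.2, symmDiff_insert_of_not_mem hp.1 ht,
        Finset.card_insert_of_notMem (by simp [Finset.mem_symmDiff, ht, hp.1])]
      omega

/-- lower bound on the length of a chain. -/
theorem chain_len (G2 : Genome V) :
    ∀ L : List (Genome V), L.Chain' SCJStep → L.getLast? = some G2 →
      ∀ G, L.head? = some G → (symmDiff G.adj G2.adj).card + 1 ≤ L.length
  | [], _, h, _, _ => by simp at h
  | [G'], _, h, G, hh => by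
      simp only [List.head?_cons, Option.some_inj] at hh
      simp only [List.getLast?_singleton, Option.some_inj] at h
      subst hh h
      simp [symmDiff_self]
  | (G' :: G'' :: rest), hc, h, G, hh => by
      simp only [List.head?_cons, Option.some_inj] at hh
      subst hh
      have hc' : (G'' :: rest).Chain' SCJStep := hc.tail
      have hstep := (List.isChain_cons_cons.mp hc).1
      have hlast : (G'' :: rest).getLast? = some G2 := by
        rwa [List.getLast?_cons_cons] at h
      have := chain_len G2 (G'' :: rest) hc' hlast G'' (by simp)
      have := step_symmDiff G2.adj hstep
      simp only [List.length_cons] at *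
      omega


-- ===== the M-shaped instance =====

def pr1 (t : ℕ) : Sym2 ℕ := s(2*t-1, 2*t)
def pr2 (t : ℕ) : Sym2 ℕ := s(2*t, 2*t+1)
def P1 (k : ℕ) : Finset (Sym2 ℕ) := (Finset.Icc 1 k).image pr1
def P2 (k : ℕ) : Finset (Sym2 ℕ) := (Finset.Icc 1 (k-1)).image pr2

theorem pr1_inj {t s : ℕ} (ht : 1 ≤ t) (hs : 1 ≤ s) (h : pr1 t = pr1 s) : t = s := by
  rw [pr1, pr1, Sym2.eq_iff] at h; omega

theorem pr2_inj {t s : ℕ} (h : pr2 t = pr2 s) : t = s := by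
  rw [pr2, pr2, Sym2.eq_iff] at h; omega

theorem pr1_ne_pr2 {t s : ℕ} (ht : 1 ≤ t) : pr1 t ≠ pr2 s := by
  rw [pr1, pr2, Ne, Sym2.eq_iff]; omega

theorem mem_pr1 {x t : ℕ} : x ∈ pr1 t ↔ x = 2*t-1 ∨ x = 2*t := Sym2.mem_iff
theorem mem_pr2 {x t : ℕ} : x ∈ pr2 t ↔ x = 2*t ∨ x = 2*t+1 := Sym2.mem_iff

theorem mem_P1 {k : ℕ} {p : Sym2 ℕ} : p ∈ P1 k ↔ ∃ t, 1 ≤ t ∧ t ≤ k ∧ p = pr1 t := by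
  simp only [P1, Finset.mem_image, Finset.mem_Icc]; tauto

theorem mem_P2 {k : ℕ} {p : Sym2 ℕ} : p ∈ P2 k ↔ ∃ t, 1 ≤ t ∧ t ≤ k-1 ∧ p = pr2 t := by
  simp only [P2, Finset.mem_image, Finset.mem_Icc]; tauto

theorem P1_disj_P2 {k : ℕ} {p : Sym2 ℕ} (h : p ∈ P1 k) : p ∉ P2 k := by
  rw [mem_P1] at h; rw [mem_P2]
  rintro ⟨s, hs1, hs2, rfl⟩
  obtain ⟨t, ht1, ht2, hp⟩ := h
  exact pr1_ne_pr2 ht1 hp.symm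

theorem card_P1 {k : ℕ} : (P1 k).card = k := by
  rw [P1, Finset.card_image_of_injOn, Nat.card_Icc]
  · omega
  · intro a ha b hb h
    simp only [Finset.coe_Icc, Set.mem_Icc] at ha hb
    exact pr1_inj ha.1 hb.1 h

theorem card_P2 {k : ℕ} : (P2 k).card = k - 1 := by
  rw [P2, Finset.card_image_of_injOn (fun a _ b _ h => pr2_inj h), Nat.card_Icc]
  omega

theorem card_symmDiff_P1_P2 {k : ℕ} (hk : 1 ≤ k) :
    (symmDiff (P1 k) (P2 k)).card = 2*k - 1 := by
  have h1 : symmDiff (P1 k) (P2 k) = (P1 k) ∪ (P2 k) := by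
    ext q
    simp only [Finset.mem_symmDiff, Finset.mem_union]
    constructor
    · tauto
    · rintro (h | h)
      · exact Or.inl ⟨h, P1_disj_P2 h⟩
      · refine Or.inr ⟨h, fun h' => P1_disj_P2 h' h⟩
  rw [h1, Finset.card_union_of_disjoint (Finset.disjoint_left.mpr fun p hp => P1_disj_P2 hp),
    card_P1, card_P2]
  omega

section WithPerm

variable {k : ℕ} (π : Equiv.Perm (Fin (2*k-1)))

/-- value of the permutation on naturals. -/
def pv (r : ℕ) : ℕ := if h : r < 2*k-1 then (π ⟨r, h⟩ : ℕ) else r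

theorem pv_lt {r : ℕ} (h : r < 2*k-1) : pv π r < 2*k-1 := by
  rw [pv, dif_pos h]; exact (π ⟨r, h⟩).2

theorem pv_inj {r s : ℕ} (hr : r < 2*k-1) (hs : s < 2*k-1) (h : pv π r = pv π s) : r = s := by
  unfold pv at h
  rw [dif_pos hr, dif_pos hs] at h
  have := π.injective (Fin.val_injective h)
  exact congrArg Fin.val this

theorem pv_symm {i : ℕ} (h : i < 2*k-1) : pv π ((π.symm ⟨i, h⟩ : Fin (2*k-1)) : ℕ) = i := by
  rw [pv, dif_pos (π.symm ⟨i, h⟩).2]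
  simp

theorem alt_even (halt : IsAltPerm π) {i : ℕ} (he : i % 2 = 0) (h : i + 1 < 2*k-1) :
    pv π i < pv π (i+1) := by
  have := halt i h
  rw [if_pos he] at this
  unfold pv
  rw [dif_pos (show i < 2*k-1 by omega), dif_pos h]
  exact this

theorem alt_odd (halt : IsAltPerm π) {i : ℕ} (he : i % 2 = 1) (h : i + 1 < 2*k-1) :
    pv π (i+1) < pv π i := by
  have := halt i h
  rw [if_neg (by omega)] at this
  unfold pv
  rw [dif_pos (show i < 2*k-1 by omega), dif_pos h]
  exact this

/-- the adjacency set at time `i` of the scenario associated to `π`. -/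
def stA (i : ℕ) : Finset (Sym2 ℕ) :=
  ((Finset.Icc 1 k).filter (fun t => i ≤ pv π (2*t-2))).image pr1 ∪
  ((Finset.Icc 1 (k-1)).filter (fun t => pv π (2*t-1) < i)).image pr2

theorem mem_stA {i : ℕ} {q : Sym2 ℕ} :
    q ∈ stA π i ↔ (∃ t, 1 ≤ t ∧ t ≤ k ∧ i ≤ pv π (2*t-2) ∧ q = pr1 t) ∨
      (∃ t, 1 ≤ t ∧ t ≤ k-1 ∧ pv π (2*t-1) < i ∧ q = pr2 t) := by
  simp only [stA, Finset.mem_union, Finset.mem_image, Finset.mem_filter, Finset.mem_Icc]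
  constructor
  · rintro (⟨t, ⟨⟨h1, h2⟩, h3⟩, rfl⟩ | ⟨t, ⟨⟨h1, h2⟩, h3⟩, rfl⟩)
    · exact Or.inl ⟨t, h1, h2, h3, rfl⟩
    · exact Or.inr ⟨t, h1, h2, h3, rfl⟩
  · rintro (⟨t, h1, h2, h3, rfl⟩ | ⟨t, h1, h2, h3, rfl⟩)
    · exact Or.inl ⟨t, ⟨⟨h1, h2⟩, h3⟩, rfl⟩
    · exact Or.inr ⟨t, ⟨⟨h1, h2⟩, h3⟩, rfl⟩

theorem stA_disj (hk : 1 ≤ k) (halt : IsAltPerm π) (i : ℕ) :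
    ∀ p ∈ stA π i, ∀ q ∈ stA π i, p ≠ q → ∀ x, x ∈ p → x ∉ q := by
  intro p hp q hq hpq x hxp hxq
  rw [mem_stA] at hp hq
  rcases hp with ⟨t, ht1, ht2, ht3, rfl⟩ | ⟨t, ht1, ht2, ht3, rfl⟩ <;>
    rcases hq with ⟨s, hs1, hs2, hs3, rfl⟩ | ⟨s, hs1, hs2, hs3, rfl⟩
  · rw [mem_pr1] at hxp hxq
    exact hpq (by rw [show t = s by omega])
  · -- pr1 t vs pr2 s : t = s or t = s + 1
    rw [mem_pr1] at hxp; rw [mem_pr2] at hxq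
    have hts : t = s ∨ t = s + 1 := by omega
    rcases hts with rfl | rfl
    · have := alt_even π halt (i := 2*t-2) (by omega) (by omega)
      have h2 : 2*t-2+1 = 2*t-1 := by omega
      rw [h2] at this; omega
    · have := alt_odd π halt (i := 2*s-1) (by omega) (by omega)
      have h2 : 2*s-1+1 = 2*s := by omega
      rw [h2] at this
      have h3 : 2*(s+1)-2 = 2*s := by omega
      rw [h3] at ht3; omega
  · rw [mem_pr2] at hxp; rw [mem_pr1] at hxq
    have hts : s = t ∨ s = t + 1 := by omega
    rcases hts with rfl | rfl
    · have := alt_even π halt (i := 2*s-2) (by omega) (by omega)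
      have h2 : 2*s-2+1 = 2*s-1 := by omega
      rw [h2] at this; omega
    · have := alt_odd π halt (i := 2*t-1) (by omega) (by omega)
      have h2 : 2*t-1+1 = 2*t := by omega
      rw [h2] at this
      have h3 : 2*(t+1)-2 = 2*t := by omega
      rw [h3] at hs3; omega
  · rw [mem_pr2] at hxp hxq
    exact hpq (by rw [show t = s by omega])

theorem stA_not_diag (i : ℕ) : ∀ p ∈ stA π i, ¬ p.IsDiag := by
  intro p hp
  rw [mem_stA] at hp
  rcases hp with ⟨t, ht1, _, _, rfl⟩ | ⟨t, _, _, _, rfl⟩ <;>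
    simp only [pr1, pr2, Sym2.isDiag_iff_proj_eq] <;> omega

/-- the genome at time `i` of the scenario associated to `π`. -/
def stG (hk : 1 ≤ k) (halt : IsAltPerm π) (i : ℕ) : Genome ℕ :=
  ⟨stA π i, stA_not_diag π i, stA_disj π hk halt i⟩


theorem stA_zero (hk : 1 ≤ k) : stA π 0 = P1 k := by
  unfold stA P1
  rw [Finset.filter_true_of_mem (fun t _ => Nat.zero_le _),
    Finset.filter_false_of_mem (fun t _ => by omega)]
  simp

theorem stA_last (hk : 1 ≤ k) : stA π (2*k-1) = P2 k := by
  unfold stA P2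
  rw [Finset.filter_false_of_mem, Finset.filter_true_of_mem]
  · simp
  · intro t ht
    rw [Finset.mem_Icc] at ht
    exact pv_lt π (by omega)
  · intro t ht
    rw [Finset.mem_Icc] at ht
    have := pv_lt π (show 2*t-2 < 2*k-1 by omega)
    omega

theorem stA_step_cut (hk : 1 ≤ k) {i t : ℕ} (hi : i + 1 < 2*k)
    (ht1 : 1 ≤ t) (ht2 : t ≤ k) (hpv : pv π (2*t-2) = i) :
    pr1 t ∈ stA π i ∧ stA π (i+1) = (stA π i).erase (pr1 t) := by
  have hmem : pr1 t ∈ stA π i := (mem_stA π).mpr (Or.inl ⟨t, ht1, ht2, by omega, rfl⟩)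
  refine ⟨hmem, ?_⟩
  ext q
  rw [Finset.mem_erase, mem_stA, mem_stA]
  constructor
  · rintro (⟨s, hs1, hs2, hs3, rfl⟩ | ⟨s, hs1, hs2, hs3, rfl⟩)
    · refine ⟨fun hq => ?_, Or.inl ⟨s, hs1, hs2, by omega, rfl⟩⟩
      have hst := pr1_inj hs1 ht1 hq
      subst hst
      omega
    · refine ⟨(pr1_ne_pr2 ht1).symm, ?_⟩
      have hne : pv π (2*s-1) ≠ i := fun hcon => by
        have := pv_inj π (show 2*s-1 < 2*k-1 by omega) (show 2*t-2 < 2*k-1 by omega)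
          (hcon.trans hpv.symm)
        omega
      exact Or.inr ⟨s, hs1, hs2, by omega, rfl⟩
  · rintro ⟨hne, ⟨s, hs1, hs2, hs3, rfl⟩ | ⟨s, hs1, hs2, hs3, rfl⟩⟩
    · have hst : s ≠ t := fun hcon => hne (by rw [hcon])
      have : pv π (2*s-2) ≠ i := fun hcon => by
        have := pv_inj π (show 2*s-2 < 2*k-1 by omega) (show 2*t-2 < 2*k-1 by omega)
          (hcon.trans hpv.symm)
        omega
      exact Or.inl ⟨s, hs1, hs2, by omega, rfl⟩
    · exact Or.inr ⟨s, hs1, hs2, by omega, rfl⟩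

theorem stA_step_join (hk : 1 ≤ k) {i t : ℕ} (hi : i + 1 < 2*k)
    (ht1 : 1 ≤ t) (ht2 : t ≤ k - 1) (hpv : pv π (2*t-1) = i) :
    pr2 t ∉ stA π i ∧ stA π (i+1) = insert (pr2 t) (stA π i) := by
  constructor
  · rw [mem_stA]
    rintro (⟨s, hs1, hs2, hs3, hq⟩ | ⟨s, hs1, hs2, hs3, hq⟩)
    · exact pr1_ne_pr2 hs1 hq.symm
    · have hst := pr2_inj hq
      subst hst
      omega
  · ext q
    rw [Finset.mem_insert, mem_stA, mem_stA]
    constructor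
    · rintro (⟨s, hs1, hs2, hs3, rfl⟩ | ⟨s, hs1, hs2, hs3, rfl⟩)
      · exact Or.inr (Or.inl ⟨s, hs1, hs2, by omega, rfl⟩)
      · rcases eq_or_ne (pv π (2*s-1)) i with hcon | hcon
        · have := pv_inj π (show 2*s-1 < 2*k-1 by omega) (show 2*t-1 < 2*k-1 by omega)
            (hcon.trans hpv.symm)
          have : s = t := by omega
          exact Or.inl (by rw [this])
        · exact Or.inr (Or.inr ⟨s, hs1, hs2, by omega, rfl⟩)
    · rintro (rfl | ⟨s, hs1, hs2, hs3, rfl⟩ | ⟨s, hs1, hs2, hs3, rfl⟩)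
      · exact Or.inr ⟨t, ht1, ht2, by omega, rfl⟩
      · have : pv π (2*s-2) ≠ i := fun hcon => by
          have := pv_inj π (show 2*s-2 < 2*k-1 by omega) (show 2*t-1 < 2*k-1 by omega)
            (hcon.trans hpv.symm)
          omega
        exact Or.inl ⟨s, hs1, hs2, by omega, rfl⟩
      · exact Or.inr ⟨s, hs1, hs2, by omega, rfl⟩

/-- the scenario list associated to an alternating permutation. -/
noncomputable def stL (hk : 1 ≤ k) (halt : IsAltPerm π) : List (Genome ℕ) :=
  List.ofFn (fun i : Fin (2*k) => stG π hk halt i)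

theorem stL_length (hk : 1 ≤ k) (halt : IsAltPerm π) : (stL π hk halt).length = 2*k := by
  simp [stL]

theorem stL_getD (hk : 1 ≤ k) (halt : IsAltPerm π) {i : ℕ} (hi : i < 2*k) :
    (stL π hk halt).getD i default = stG π hk halt i := by
  rw [List.getD_eq_getElem _ _ (by rw [stL_length]; omega)]
  simp only [stL]
  rw [List.getElem_ofFn]

/-- each step of `stL`, classified by the parity of the operation index `r`. -/
theorem stL_step (hk : 1 ≤ k) (halt : IsAltPerm π) {i r : ℕ} (hi : i + 1 < 2*k)
    (hr : r < 2*k-1) (hpv : pv π r = i) :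
    (r % 2 = 0 → CutsAdj ((stL π hk halt).getD i default)
        ((stL π hk halt).getD (i+1) default) (pr1 (r/2+1))) ∧
    (r % 2 = 1 → JoinsAdj ((stL π hk halt).getD i default)
        ((stL π hk halt).getD (i+1) default) (pr2 ((r+1)/2))) := by
  rw [stL_getD π hk halt (by omega), stL_getD π hk halt hi]
  constructor
  · intro hpar
    have h := stA_step_cut π hk (t := r/2+1) hi (by omega) (by omega) (by
      rw [show 2*(r/2+1)-2 = r by omega]; exact hpv)
    exact ⟨h.1, h.2⟩
  · intro hpar
    have h := stA_step_join π hk (t := (r+1)/2) hi (by omega) (by omega) (by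
      rw [show 2*((r+1)/2)-1 = r by omega]; exact hpv)
    exact ⟨h.1, h.2⟩

theorem stL_chain (hk : 1 ≤ k) (halt : IsAltPerm π) : (stL π hk halt).Chain' SCJStep := by
  unfold stL
  show List.IsChain SCJStep _
  rw [List.isChain_ofFn]
  intro i hi
  have hgd1 : stG π hk halt i = (stL π hk halt).getD i default :=
    (stL_getD π hk halt (by omega)).symm
  have hgd2 : stG π hk halt (i+1) = (stL π hk halt).getD (i+1) default :=
    (stL_getD π hk halt hi).symm
  show SCJStep (stG π hk halt i) (stG π hk halt (i+1))
  rw [hgd1, hgd2]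
  have hilt : i < 2*k-1 := by omega
  have h := stL_step π hk halt hi (π.symm ⟨i, hilt⟩).2 (pv_symm π hilt)
  rcases Nat.even_or_odd ((π.symm ⟨i, hilt⟩ : Fin (2*k-1)) : ℕ) with he | he
  · rw [Nat.even_iff] at he
    exact ⟨_, Or.inl (h.1 he)⟩
  · rw [Nat.odd_iff] at he
    exact ⟨_, Or.inr (h.2 he)⟩

theorem stL_getElem (hk : 1 ≤ k) (halt : IsAltPerm π) {i : ℕ}
    (h : i < (stL π hk halt).length) : (stL π hk halt)[i] = stG π hk halt i := by
  simp only [stL]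
  rw [List.getElem_ofFn]

theorem stL_scenario (hk : 1 ≤ k) (halt : IsAltPerm π) (G1 G2 : Genome ℕ)
    (h1 : G1.adj = P1 k) (h2 : G2.adj = P2 k) :
    IsScenario G1 G2 (stL π hk halt) := by
  refine ⟨?_, ?_, stL_chain π hk halt⟩
  · rw [List.head?_eq_getElem?,
      List.getElem?_eq_getElem (by rw [stL_length]; omega), stL_getElem]
    exact congrArg some (Genome.ext' ((stA_zero π hk).trans h1.symm))
  · rw [List.getLast?_eq_getElem?,
      List.getElem?_eq_getElem (by rw [stL_length]; omega), stL_getElem]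
    rw [stL_length]
    exact congrArg some (Genome.ext' ((stA_last π hk).trans h2.symm))


theorem stL_scenperm (hk : 1 ≤ k) (halt : IsAltPerm π) : ScenPerm k (stL π hk halt) π := by
  constructor
  · intro t ht1 ht2 h
    have hpv : pv π (2*t-2) = (π ⟨2*t-2, h⟩ : ℕ) := by unfold pv; rw [dif_pos h]
    have hi : (π ⟨2*t-2, h⟩ : ℕ) + 1 < 2*k := by
      have := (π ⟨2*t-2, h⟩).2; omega
    refine ⟨by rw [stL_length]; omega, ?_⟩
    have hstep := (stL_step π hk halt hi h hpv).1 (by omega)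
    rw [show (2*t-2)/2+1 = t by omega] at hstep
    exact hstep
  · intro t ht1 ht2 h
    have hpv : pv π (2*t-1) = (π ⟨2*t-1, h⟩ : ℕ) := by unfold pv; rw [dif_pos h]
    have hi : (π ⟨2*t-1, h⟩ : ℕ) + 1 < 2*k := by
      have := (π ⟨2*t-1, h⟩).2; omega
    refine ⟨by rw [stL_length]; omega, ?_⟩
    have hstep := (stL_step π hk halt hi h hpv).2 (by omega)
    rw [show (2*t-1+1)/2 = t by omega] at hstep
    exact hstep

end WithPerm

/-- an explicit alternating permutation: cuts first, then joins. -/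
theorem exists_alt (k : ℕ) (hk : 1 ≤ k) : ∃ π : Equiv.Perm (Fin (2*k-1)), IsAltPerm π := by
  set n := 2*k-1 with hn
  have hg : ∀ r : Fin n, (if (r : ℕ) % 2 = 0 then (r : ℕ)/2 else k + (r : ℕ)/2) < n := by
    intro r
    have := r.2
    rcases Nat.even_or_odd (r : ℕ) with he | he
    · rw [Nat.even_iff] at he; rw [if_pos he]; omega
    · rw [Nat.odd_iff] at he; rw [if_neg (by omega)]; omega
  set g : Fin n → Fin n := fun r => ⟨if (r : ℕ) % 2 = 0 then (r : ℕ)/2 else k + (r : ℕ)/2, hg r⟩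
    with hgdef
  have hinj : Function.Injective g := by
    intro a b hab
    have h2 := congrArg Fin.val hab
    simp only [hgdef] at h2
    have ha := a.2
    have hb := b.2
    apply Fin.ext
    split_ifs at h2 <;> omega
  refine ⟨Equiv.ofBijective g (Finite.injective_iff_bijective.mp hinj), ?_⟩
  intro i h
  have hgap : ∀ (j : ℕ) (hj : j < n),
      ((Equiv.ofBijective g (Finite.injective_iff_bijective.mp hinj)) ⟨j, hj⟩ : ℕ) =
        if j % 2 = 0 then j/2 else k + j/2 := fun j hj => rfl
  by_cases hpar : i % 2 = 0
  · rw [if_pos hpar, Fin.lt_def, hgap i (by omega), hgap (i+1) h,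
      if_pos hpar, if_neg (by omega)]
    omega
  · rw [if_neg hpar, Fin.lt_def, hgap i (by omega), hgap (i+1) h,
      if_neg hpar, if_pos (by omega)]
    omega


theorem dSCJ_eq {k : ℕ} (hk : 1 ≤ k) {G1 G2 : Genome ℕ}
    (h1 : G1.adj = P1 k) (h2 : G2.adj = P2 k) : dSCJ G1 G2 = 2*k-1 := by
  obtain ⟨π0, h0⟩ := exists_alt k hk
  have hub : (2*k-1) ∈ {n | ∃ L, IsScenario G1 G2 L ∧ L.length = n + 1} :=
    ⟨stL π0 hk h0, stL_scenario π0 hk h0 G1 G2 h1 h2, by rw [stL_length]; omega⟩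
  have hlb : ∀ n ∈ {n | ∃ L, IsScenario G1 G2 L ∧ L.length = n + 1}, 2*k-1 ≤ n := by
    rintro n ⟨L, ⟨hh, hl, hc⟩, hlen⟩
    have := chain_len G2 L hc hl G1 hh
    rw [h1, h2, card_symmDiff_P1_P2 hk] at this
    omega
  exact le_antisymm (Nat.sInf_le hub) (le_csInf ⟨_, hub⟩ hlb)

theorem stL_mps {k : ℕ} (π : Equiv.Perm (Fin (2*k-1))) (hk : 1 ≤ k) (halt : IsAltPerm π)
    {G1 G2 : Genome ℕ} (h1 : G1.adj = P1 k) (h2 : G2.adj = P2 k) :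
    IsMPS G1 G2 (stL π hk halt) :=
  ⟨stL_scenario π hk halt G1 G2 h1 h2, by rw [stL_length, dSCJ_eq hk h1 h2]; omega⟩

-- ===== analysis of an arbitrary MPS =====
section MPSAnalysis

/-- adjacency set at time `i`. -/
def AD (L : List (Genome ℕ)) (i : ℕ) : Finset (Sym2 ℕ) := (L.getD i default).adj

variable {k : ℕ} {G1 G2 : Genome ℕ} {L : List (Genome ℕ)}

theorem mps_length (hk : 1 ≤ k) (h1 : G1.adj = P1 k) (h2 : G2.adj = P2 k)
    (hm : IsMPS G1 G2 L) : L.length = 2*k := by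
  rw [hm.2, dSCJ_eq hk h1 h2]; omega

theorem mps_step (hk : 1 ≤ k) (h1 : G1.adj = P1 k) (h2 : G2.adj = P2 k)
    (hm : IsMPS G1 G2 L) {i : ℕ} (hi : i + 1 < 2*k) :
    SCJStep (L.getD i default) (L.getD (i+1) default) := by
  have hlen := mps_length hk h1 h2 hm
  have := (List.isChain_iff_getElem.mp hm.1.2.2) i (by omega)
  rw [List.getD_eq_getElem _ _ (by omega), List.getD_eq_getElem _ _ (by omega)]
  exact this

theorem AD_zero (hk : 1 ≤ k) (h1 : G1.adj = P1 k) (h2 : G2.adj = P2 k)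
    (hm : IsMPS G1 G2 L) : AD L 0 = P1 k := by
  have hlen := mps_length hk h1 h2 hm
  have h0 : L[0]? = some G1 := by rw [← List.head?_eq_getElem?]; exact hm.1.1
  rw [List.getElem?_eq_getElem (by omega)] at h0
  unfold AD
  rw [List.getD_eq_getElem _ _ (by omega), Option.some_inj.mp h0, h1]

theorem AD_last (hk : 1 ≤ k) (h1 : G1.adj = P1 k) (h2 : G2.adj = P2 k)
    (hm : IsMPS G1 G2 L) : AD L (2*k-1) = P2 k := by
  have hlen := mps_length hk h1 h2 hm
  have h0 : L[L.length - 1]? = some G2 := by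
    rw [← List.getLast?_eq_getElem?]; exact hm.1.2.1
  rw [show L.length - 1 = 2*k-1 from by omega] at h0
  rw [List.getElem?_eq_getElem (by omega)] at h0
  unfold AD
  rw [List.getD_eq_getElem _ _ (by omega)]
  rw [Option.some_inj.mp h0, h2]

theorem d_upper (hk : 1 ≤ k) (h1 : G1.adj = P1 k) (h2 : G2.adj = P2 k)
    (hm : IsMPS G1 G2 L) : ∀ j i : ℕ, i + j = 2*k-1 →
    (symmDiff (AD L i) (P2 k)).card ≤ j := by
  intro j
  induction j with
  | zero =>
    intro i hij
    have : i = 2*k-1 := by omega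
    rw [this, AD_last hk h1 h2 hm, symmDiff_self]
    simp
  | succ j ih =>
    intro i hij
    have hstep := mps_step hk h1 h2 hm (i := i) (by omega)
    have := step_symmDiff (G := L.getD i default) (G' := L.getD (i+1) default)
      (P2 k) hstep
    have := ih (i+1) (by omega)
    unfold AD at *
    omega

theorem d_lower (hk : 1 ≤ k) (h1 : G1.adj = P1 k) (h2 : G2.adj = P2 k)
    (hm : IsMPS G1 G2 L) : ∀ i : ℕ, i ≤ 2*k-1 →
    2*k-1-i ≤ (symmDiff (AD L i) (P2 k)).card := by
  intro i
  induction i with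
  | zero =>
    intro _
    rw [AD_zero hk h1 h2 hm, card_symmDiff_P1_P2 hk]
    omega
  | succ i ih =>
    intro hi
    have hstep := mps_step hk h1 h2 hm (i := i) (by omega)
    have := step_symmDiff (G := L.getD i default) (G' := L.getD (i+1) default)
      (P2 k) hstep
    have := ih (by omega)
    unfold AD at *
    omega

theorem d_exact (hk : 1 ≤ k) (h1 : G1.adj = P1 k) (h2 : G2.adj = P2 k)
    (hm : IsMPS G1 G2 L) {i : ℕ} (hi : i ≤ 2*k-1) :
    (symmDiff (AD L i) (P2 k)).card = 2*k-1-i :=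
  le_antisymm (d_upper hk h1 h2 hm _ i (by omega)) (d_lower hk h1 h2 hm i hi)

theorem step_class (hk : 1 ≤ k) (h1 : G1.adj = P1 k) (h2 : G2.adj = P2 k)
    (hm : IsMPS G1 G2 L) {i : ℕ} (hi : i + 1 < 2*k) :
    (∃ p, p ∉ P2 k ∧ CutsAdj (L.getD i default) (L.getD (i+1) default) p) ∨
    (∃ p, p ∈ P2 k ∧ JoinsAdj (L.getD i default) (L.getD (i+1) default) p) := by
  have hdi := d_exact hk h1 h2 hm (i := i) (by omega)
  have hdi1 := d_exact hk h1 h2 hm (i := i+1) (by omega)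
  obtain ⟨p, hp | hp⟩ := mps_step hk h1 h2 hm hi
  · refine Or.inl ⟨p, fun hP2 => ?_, hp⟩
    have he : symmDiff (AD L (i+1)) (P2 k) = insert p (symmDiff (AD L i) (P2 k)) := by
      show symmDiff (L.getD (i+1) default).adj _ = _
      rw [hp.2]
      exact symmDiff_erase_of_mem' hp.1 hP2
    have hpn : p ∉ symmDiff (AD L i) (P2 k) := by
      rw [Finset.mem_symmDiff]
      push_neg
      exact ⟨fun _ => hP2, fun _ => hp.1⟩
    have := Finset.card_insert_of_notMem hpn
    rw [← he] at this
    omega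
  · refine Or.inr ⟨p, ?_, hp⟩
    by_contra hP2
    have he : symmDiff (AD L (i+1)) (P2 k) = insert p (symmDiff (AD L i) (P2 k)) := by
      show symmDiff (L.getD (i+1) default).adj _ = _
      rw [hp.2]
      exact symmDiff_insert_of_not_mem hp.1 hP2
    have hpn : p ∉ symmDiff (AD L i) (P2 k) := by
      rw [Finset.mem_symmDiff]
      push_neg
      exact ⟨fun h => absurd h hp.1, fun h => absurd h hP2⟩
    have := Finset.card_insert_of_notMem hpn
    rw [← he] at this
    omega

theorem cut_not_P2 (hk : 1 ≤ k) (h1 : G1.adj = P1 k) (h2 : G2.adj = P2 k)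
    (hm : IsMPS G1 G2 L) {i : ℕ} (hi : i + 1 < 2*k) {p : Sym2 ℕ}
    (hc : CutsAdj (L.getD i default) (L.getD (i+1) default) p) : p ∉ P2 k := by
  rcases step_class hk h1 h2 hm hi with ⟨q, hq1, hq2⟩ | ⟨q, hq1, hq2⟩
  · rwa [cut_eq hc hq2]
  · exact absurd (not_cut_join hc hq2) not_false

theorem join_in_P2 (hk : 1 ≤ k) (h1 : G1.adj = P1 k) (h2 : G2.adj = P2 k)
    (hm : IsMPS G1 G2 L) {i : ℕ} (hi : i + 1 < 2*k) {p : Sym2 ℕ}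
    (hc : JoinsAdj (L.getD i default) (L.getD (i+1) default) p) : p ∈ P2 k := by
  rcases step_class hk h1 h2 hm hi with ⟨q, hq1, hq2⟩ | ⟨q, hq1, hq2⟩
  · exact absurd (not_cut_join hq2 hc) not_false
  · rwa [join_eq hc hq2]

theorem AD_subset (hk : 1 ≤ k) (h1 : G1.adj = P1 k) (h2 : G2.adj = P2 k)
    (hm : IsMPS G1 G2 L) : ∀ i : ℕ, i ≤ 2*k-1 → AD L i ⊆ P1 k ∪ P2 k := by
  intro i
  induction i with
  | zero =>
    intro _
    rw [AD_zero hk h1 h2 hm]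
    exact Finset.subset_union_left
  | succ i ih =>
    intro hi
    obtain ⟨p, hp | hp⟩ := mps_step hk h1 h2 hm (i := i) (by omega)
    · show (L.getD (i+1) default).adj ⊆ _
      rw [hp.2]
      exact (Finset.erase_subset _ _).trans (ih (by omega))
    · show (L.getD (i+1) default).adj ⊆ _
      rw [hp.2]
      intro q hq
      rcases Finset.mem_insert.mp hq with rfl | hq
      · exact Finset.mem_union_right _ (join_in_P2 hk h1 h2 hm (by omega) hp)
      · exact ih (by omega) hq

theorem cut_in_P1 (hk : 1 ≤ k) (h1 : G1.adj = P1 k) (h2 : G2.adj = P2 k)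
    (hm : IsMPS G1 G2 L) {i : ℕ} (hi : i + 1 < 2*k) {p : Sym2 ℕ}
    (hc : CutsAdj (L.getD i default) (L.getD (i+1) default) p) : p ∈ P1 k := by
  have hmem : p ∈ AD L i := hc.1
  have := AD_subset hk h1 h2 hm i (by omega) hmem
  rcases Finset.mem_union.mp this with h | h
  · exact h
  · exact absurd h (cut_not_P2 hk h1 h2 hm hi hc)

-- persistence lemmas
theorem stay_until_cut (hk : 1 ≤ k) (h1 : G1.adj = P1 k) (h2 : G2.adj = P2 k)
    (hm : IsMPS G1 G2 L) {p : Sym2 ℕ} {i : ℕ} (hpi : p ∈ AD L i) :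
    ∀ m, i ≤ m → m ≤ 2*k-1 →
      (∀ j, i ≤ j → j < m → ¬ CutsAdj (L.getD j default) (L.getD (j+1) default) p) →
      p ∈ AD L m := by
  intro m him
  induction m, him using Nat.le_induction with
  | base => intro _ _; exact hpi
  | succ n hn ih =>
    intro hn1 hcuts
    have hpn : p ∈ AD L n := ih (by omega) (fun j hj1 hj2 => hcuts j hj1 (by omega))
    obtain ⟨q, hq | hq⟩ := mps_step hk h1 h2 hm (i := n) (by omega)
    · show p ∈ (L.getD (n+1) default).adj
      rw [hq.2, Finset.mem_erase]
      refine ⟨fun hpq => hcuts n hn (by omega) ?_, hpn⟩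
      rwa [hpq]
    · show p ∈ (L.getD (n+1) default).adj
      rw [hq.2]
      exact Finset.mem_insert_of_mem hpn

theorem gone_after (hk : 1 ≤ k) (h1 : G1.adj = P1 k) (h2 : G2.adj = P2 k)
    (hm : IsMPS G1 G2 L) {p : Sym2 ℕ} (hp2 : p ∉ P2 k) {i : ℕ} (hpi : p ∉ AD L i) :
    ∀ m, i ≤ m → m ≤ 2*k-1 → p ∉ AD L m := by
  intro m him
  induction m, him using Nat.le_induction with
  | base => intro _; exact hpi
  | succ n hn ih =>
    intro hn1
    have hpn : p ∉ AD L n := ih (by omega)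
    obtain ⟨q, hq | hq⟩ := mps_step hk h1 h2 hm (i := n) (by omega)
    · show p ∉ (L.getD (n+1) default).adj
      rw [hq.2, Finset.mem_erase]
      exact fun h => hpn h.2
    · show p ∉ (L.getD (n+1) default).adj
      rw [hq.2, Finset.mem_insert]
      rintro (rfl | h)
      · exact hp2 (join_in_P2 hk h1 h2 hm (by omega) hq)
      · exact hpn h

theorem stays_in (hk : 1 ≤ k) (h1 : G1.adj = P1 k) (h2 : G2.adj = P2 k)
    (hm : IsMPS G1 G2 L) {p : Sym2 ℕ} (hp2 : p ∈ P2 k) {i : ℕ} (hpi : p ∈ AD L i) :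
    ∀ m, i ≤ m → m ≤ 2*k-1 → p ∈ AD L m := by
  intro m him
  induction m, him using Nat.le_induction with
  | base => intro _; exact hpi
  | succ n hn ih =>
    intro hn1
    have hpn : p ∈ AD L n := ih (by omega)
    obtain ⟨q, hq | hq⟩ := mps_step hk h1 h2 hm (i := n) (by omega)
    · show p ∈ (L.getD (n+1) default).adj
      rw [hq.2, Finset.mem_erase]
      refine ⟨fun hpq => ?_, hpn⟩
      exact cut_not_P2 hk h1 h2 hm (by omega) hq (by rwa [← hpq])
    · show p ∈ (L.getD (n+1) default).adj
      rw [hq.2]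
      exact Finset.mem_insert_of_mem hpn

theorem not_yet_joined (hk : 1 ≤ k) (h1 : G1.adj = P1 k) (h2 : G2.adj = P2 k)
    (hm : IsMPS G1 G2 L) {p : Sym2 ℕ} {i : ℕ} (hpi : p ∉ AD L i) :
    ∀ m, i ≤ m → m ≤ 2*k-1 →
      (∀ j, i ≤ j → j < m → ¬ JoinsAdj (L.getD j default) (L.getD (j+1) default) p) →
      p ∉ AD L m := by
  intro m him
  induction m, him using Nat.le_induction with
  | base => intro _ _; exact hpi
  | succ n hn ih =>
    intro hn1 hjoins
    have hpn : p ∉ AD L n := ih (by omega) (fun j hj1 hj2 => hjoins j hj1 (by omega))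
    obtain ⟨q, hq | hq⟩ := mps_step hk h1 h2 hm (i := n) (by omega)
    · show p ∉ (L.getD (n+1) default).adj
      rw [hq.2, Finset.mem_erase]
      exact fun h => hpn h.2
    · show p ∉ (L.getD (n+1) default).adj
      rw [hq.2, Finset.mem_insert]
      rintro (rfl | h)
      · exact hjoins n hn (by omega) hq
      · exact hpn h


theorem exists_cut (hk : 1 ≤ k) (h1 : G1.adj = P1 k) (h2 : G2.adj = P2 k)
    (hm : IsMPS G1 G2 L) {p : Sym2 ℕ} (hp : p ∈ P1 k) :
    ∃ c, c + 1 < 2*k ∧ CutsAdj (L.getD c default) (L.getD (c+1) default) p := by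
  by_contra hcon
  push_neg at hcon
  have hstay := stay_until_cut hk h1 h2 hm (p := p) (i := 0)
    (by rw [AD_zero hk h1 h2 hm]; exact hp) (2*k-1) (by omega) le_rfl
    (fun j hj1 hj2 => hcon j (by omega))
  rw [AD_last hk h1 h2 hm] at hstay
  exact P1_disj_P2 hp hstay

theorem cut_unique (hk : 1 ≤ k) (h1 : G1.adj = P1 k) (h2 : G2.adj = P2 k)
    (hm : IsMPS G1 G2 L) {p : Sym2 ℕ} {c c' : ℕ} (hcb : c + 1 < 2*k) (hcb' : c' + 1 < 2*k)
    (hc : CutsAdj (L.getD c default) (L.getD (c+1) default) p)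
    (hc' : CutsAdj (L.getD c' default) (L.getD (c'+1) default) p) : c = c' := by
  have key : ∀ a b : ℕ, a + 1 < 2*k → b + 1 < 2*k → a < b →
      CutsAdj (L.getD a default) (L.getD (a+1) default) p →
      CutsAdj (L.getD b default) (L.getD (b+1) default) p → False := by
    intro a b hab hbb haltb hca hcb2
    have hnp2 : p ∉ P2 k := cut_not_P2 hk h1 h2 hm hab hca
    have hout : p ∉ AD L (a+1) := by
      show p ∉ (L.getD (a+1) default).adj
      rw [hca.2]
      exact Finset.notMem_erase p _
    have := gone_after hk h1 h2 hm hnp2 hout b (by omega) (by omega)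
    exact this hcb2.1
  rcases lt_trichotomy c c' with h | h | h
  · exact absurd (key c c' hcb hcb' h hc hc') not_false
  · exact h
  · exact absurd (key c' c hcb' hcb h hc' hc) not_false

theorem exists_join (hk : 1 ≤ k) (h1 : G1.adj = P1 k) (h2 : G2.adj = P2 k)
    (hm : IsMPS G1 G2 L) {p : Sym2 ℕ} (hp : p ∈ P2 k) :
    ∃ c, c + 1 < 2*k ∧ JoinsAdj (L.getD c default) (L.getD (c+1) default) p := by
  by_contra hcon
  push_neg at hcon
  have hstay := not_yet_joined hk h1 h2 hm (p := p) (i := 0)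
    (by rw [AD_zero hk h1 h2 hm]; exact fun hin => P1_disj_P2 hin hp) (2*k-1)
    (by omega) le_rfl (fun j hj1 hj2 => hcon j (by omega))
  rw [AD_last hk h1 h2 hm] at hstay
  exact hstay hp

theorem join_unique (hk : 1 ≤ k) (h1 : G1.adj = P1 k) (h2 : G2.adj = P2 k)
    (hm : IsMPS G1 G2 L) {p : Sym2 ℕ} {c c' : ℕ} (hcb : c + 1 < 2*k) (hcb' : c' + 1 < 2*k)
    (hc : JoinsAdj (L.getD c default) (L.getD (c+1) default) p)
    (hc' : JoinsAdj (L.getD c' default) (L.getD (c'+1) default) p) : c = c' := by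
  have key : ∀ a b : ℕ, a + 1 < 2*k → b + 1 < 2*k → a < b →
      JoinsAdj (L.getD a default) (L.getD (a+1) default) p →
      JoinsAdj (L.getD b default) (L.getD (b+1) default) p → False := by
    intro a b hab hbb haltb hca hcb2
    have hp2 : p ∈ P2 k := join_in_P2 hk h1 h2 hm hab hca
    have hin : p ∈ AD L (a+1) := by
      show p ∈ (L.getD (a+1) default).adj
      rw [hca.2]
      exact Finset.mem_insert_self p _
    have := stays_in hk h1 h2 hm hp2 hin b (by omega) (by omega)
    exact hcb2.1 this
  rcases lt_trichotomy c c' with h | h | h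
  · exact absurd (key c c' hcb hcb' h hc hc') not_false
  · exact h
  · exact absurd (key c' c hcb' hcb h hc' hc) not_false

theorem pres_cut (hk : 1 ≤ k) (h1 : G1.adj = P1 k) (h2 : G2.adj = P2 k)
    (hm : IsMPS G1 G2 L) {t : ℕ} (ht1 : 1 ≤ t) (ht2 : t ≤ k) {c : ℕ} (hcb : c + 1 < 2*k)
    (hc : CutsAdj (L.getD c default) (L.getD (c+1) default) (pr1 t))
    {i : ℕ} (hi : i ≤ 2*k-1) : pr1 t ∈ AD L i ↔ i ≤ c := by
  have hp1 : pr1 t ∈ P1 k := mem_P1.mpr ⟨t, ht1, ht2, rfl⟩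
  have hnp2 : pr1 t ∉ P2 k := P1_disj_P2 hp1
  constructor
  · intro hmem
    by_contra hci
    push_neg at hci
    have hout : pr1 t ∉ AD L (c+1) := by
      show pr1 t ∉ (L.getD (c+1) default).adj
      rw [hc.2]
      exact Finset.notMem_erase _ _
    exact gone_after hk h1 h2 hm hnp2 hout i (by omega) hi hmem
  · intro hic
    refine stay_until_cut hk h1 h2 hm (i := 0)
      (by rw [AD_zero hk h1 h2 hm]; exact hp1) i (by omega) hi ?_
    intro j hj1 hj2 hcut
    have := cut_unique hk h1 h2 hm (by omega) hcb hcut hc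
    omega

theorem pres_join (hk : 1 ≤ k) (h1 : G1.adj = P1 k) (h2 : G2.adj = P2 k)
    (hm : IsMPS G1 G2 L) {t : ℕ} (ht1 : 1 ≤ t) (ht2 : t ≤ k-1) {c : ℕ} (hcb : c + 1 < 2*k)
    (hc : JoinsAdj (L.getD c default) (L.getD (c+1) default) (pr2 t))
    {i : ℕ} (hi : i ≤ 2*k-1) : pr2 t ∈ AD L i ↔ c < i := by
  have hp2 : pr2 t ∈ P2 k := mem_P2.mpr ⟨t, ht1, ht2, rfl⟩
  constructor
  · intro hmem
    by_contra hci
    push_neg at hci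
    have hnotyet := not_yet_joined hk h1 h2 hm (p := pr2 t) (i := 0)
      (by rw [AD_zero hk h1 h2 hm]; exact fun hin => P1_disj_P2 hin hp2) i (by omega) hi ?_
    · exact hnotyet hmem
    · intro j hj1 hj2 hjoin
      have := join_unique hk h1 h2 hm (by omega) hcb hjoin hc
      omega
  · intro hci
    have hin : pr2 t ∈ AD L (c+1) := by
      show pr2 t ∈ (L.getD (c+1) default).adj
      rw [hc.2]
      exact Finset.mem_insert_self _ _
    exact stays_in hk h1 h2 hm hp2 hin i (by omega) hi


theorem mps_scenperm (hk : 1 ≤ k) (h1 : G1.adj = P1 k) (h2 : G2.adj = P2 k)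
    (hm : IsMPS G1 G2 L) :
    ∃ π : Equiv.Perm (Fin (2*k-1)), ScenPerm k L π ∧
      ∀ π' : Equiv.Perm (Fin (2*k-1)), ScenPerm k L π' → π' = π := by
  have hlen := mps_length hk h1 h2 hm
  have hcut : ∀ t : ℕ, ∃ c, 1 ≤ t → t ≤ k →
      c + 1 < 2*k ∧ CutsAdj (L.getD c default) (L.getD (c+1) default) (pr1 t) := by
    intro t
    by_cases h : 1 ≤ t ∧ t ≤ k
    · obtain ⟨c, hc⟩ := exists_cut hk h1 h2 hm (mem_P1.mpr ⟨t, h.1, h.2, rfl⟩)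
      exact ⟨c, fun _ _ => hc⟩
    · exact ⟨0, fun ha hb => absurd ⟨ha, hb⟩ h⟩
  have hjoin : ∀ t : ℕ, ∃ c, 1 ≤ t → t ≤ k-1 →
      c + 1 < 2*k ∧ JoinsAdj (L.getD c default) (L.getD (c+1) default) (pr2 t) := by
    intro t
    by_cases h : 1 ≤ t ∧ t ≤ k-1
    · obtain ⟨c, hc⟩ := exists_join hk h1 h2 hm (mem_P2.mpr ⟨t, h.1, h.2, rfl⟩)
      exact ⟨c, fun _ _ => hc⟩
    · exact ⟨0, fun ha hb => absurd ⟨ha, hb⟩ h⟩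
  choose cutc hcutc using hcut
  choose joinc hjoinc using hjoin
  set g : Fin (2*k-1) → Fin (2*k-1) := fun r =>
    if h : (r : ℕ) % 2 = 0 then
      ⟨cutc ((r : ℕ)/2+1), by
        have hb := r.2
        have := (hcutc ((r : ℕ)/2+1) (by omega) (by omega)).1
        omega⟩
    else
      ⟨joinc (((r : ℕ)+1)/2), by
        have hb := r.2
        have := (hjoinc (((r : ℕ)+1)/2) (by omega) (by omega)).1
        omega⟩
    with hgdef
  have hginj : Function.Injective g := by
    intro a b hab
    have ha2 := a.2
    have hb2 := b.2
    have hv := congrArg Fin.val hab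
    simp only [hgdef] at hv
    by_cases hpa : (a : ℕ) % 2 = 0 <;> by_cases hpb : (b : ℕ) % 2 = 0
    · rw [dif_pos hpa, dif_pos hpb] at hv
      simp only at hv
      have hA := hcutc ((a : ℕ)/2+1) (by omega) (by omega)
      have hB := hcutc ((b : ℕ)/2+1) (by omega) (by omega)
      rw [← hv] at hB
      have := pr1_inj (by omega) (by omega) (cut_eq hA.2 hB.2)
      apply Fin.ext
      omega
    · rw [dif_pos hpa, dif_neg hpb] at hv
      simp only at hv
      have hA := hcutc ((a : ℕ)/2+1) (by omega) (by omega)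
      have hB := hjoinc (((b : ℕ)+1)/2) (by omega) (by omega)
      rw [← hv] at hB
      exact absurd (not_cut_join hA.2 hB.2) not_false
    · rw [dif_neg hpa, dif_pos hpb] at hv
      simp only at hv
      have hA := hjoinc (((a : ℕ)+1)/2) (by omega) (by omega)
      have hB := hcutc (((b : ℕ))/2+1) (by omega) (by omega)
      rw [← hv] at hB
      exact absurd (not_cut_join hB.2 hA.2) not_false
    · rw [dif_neg hpa, dif_neg hpb] at hv
      simp only at hv
      have hA := hjoinc (((a : ℕ)+1)/2) (by omega) (by omega)
      have hB := hjoinc (((b : ℕ)+1)/2) (by omega) (by omega)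
      rw [← hv] at hB
      have := pr2_inj (join_eq hA.2 hB.2)
      apply Fin.ext
      omega
  refine ⟨Equiv.ofBijective g (Finite.injective_iff_bijective.mp hginj), ⟨?_, ?_⟩, ?_⟩
  · intro t ht1 ht2 h
    have hval : ((Equiv.ofBijective g (Finite.injective_iff_bijective.mp hginj)
        ⟨2*t-2, h⟩ : Fin (2*k-1)) : ℕ) = cutc t := by
      show ((g ⟨2*t-2, h⟩ : Fin (2*k-1)) : ℕ) = cutc t
      simp only [hgdef]
      rw [dif_pos (by show (2*t-2) % 2 = 0; omega)]
      show cutc ((2*t-2)/2+1) = cutc t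
      rw [show (2*t-2)/2+1 = t from by omega]
    rw [hval]
    have hc := hcutc t ht1 ht2
    exact ⟨by omega, hc.2⟩
  · intro t ht1 ht2 h
    have hval : ((Equiv.ofBijective g (Finite.injective_iff_bijective.mp hginj)
        ⟨2*t-1, h⟩ : Fin (2*k-1)) : ℕ) = joinc t := by
      show ((g ⟨2*t-1, h⟩ : Fin (2*k-1)) : ℕ) = joinc t
      simp only [hgdef]
      rw [dif_neg (by show ¬ ((2*t-1) % 2 = 0); omega)]
      show joinc ((2*t-1+1)/2) = joinc t
      rw [show (2*t-1+1)/2 = t from by omega]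
    rw [hval]
    have hc := hjoinc t ht1 ht2
    exact ⟨by omega, hc.2⟩
  · intro π' hsp'
    apply Equiv.ext
    intro r
    have hr2 := r.2
    apply Fin.ext
    by_cases hp : (r : ℕ) % 2 = 0
    · set t := (r : ℕ)/2 + 1 with htdef
      have hb1 : 2*t-2 < 2*k-1 := by omega
      obtain ⟨hs1, hs2⟩ := hsp'.1 t (by omega) (by omega) hb1
      rw [hlen] at hs1
      have hC := hcutc t (by omega) (by omega)
      have heq : ((π' ⟨2*t-2, hb1⟩ : Fin (2*k-1)) : ℕ) = cutc t :=
        cut_unique hk h1 h2 hm hs1 hC.1 hs2 hC.2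
      have hrt : (⟨2*t-2, hb1⟩ : Fin (2*k-1)) = r := Fin.ext (by show 2*t-2 = (r : ℕ); omega)
      have h5 : ((π' r : Fin (2*k-1)) : ℕ) = cutc t := by
        rw [← congrArg (fun x => ((π' x : Fin (2*k-1)) : ℕ)) hrt]
        exact heq
      have hval : ((Equiv.ofBijective g (Finite.injective_iff_bijective.mp hginj)
          r : Fin (2*k-1)) : ℕ) = cutc t := by
        show ((g r : Fin (2*k-1)) : ℕ) = cutc t
        simp only [hgdef]
        rw [dif_pos hp]
      rw [h5, hval]
    · set t := ((r : ℕ)+1)/2 with htdef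
      have hb1 : 2*t-1 < 2*k-1 := by omega
      obtain ⟨hs1, hs2⟩ := hsp'.2 t (by omega) (by omega) hb1
      rw [hlen] at hs1
      have hC := hjoinc t (by omega) (by omega)
      have heq : ((π' ⟨2*t-1, hb1⟩ : Fin (2*k-1)) : ℕ) = joinc t :=
        join_unique hk h1 h2 hm hs1 hC.1 hs2 hC.2
      have hrt : (⟨2*t-1, hb1⟩ : Fin (2*k-1)) = r := Fin.ext (by show 2*t-1 = (r : ℕ); omega)
      have h5 : ((π' r : Fin (2*k-1)) : ℕ) = joinc t := by
        rw [← congrArg (fun x => ((π' x : Fin (2*k-1)) : ℕ)) hrt]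
        exact heq
      have hval : ((Equiv.ofBijective g (Finite.injective_iff_bijective.mp hginj)
          r : Fin (2*k-1)) : ℕ) = joinc t := by
        show ((g r : Fin (2*k-1)) : ℕ) = joinc t
        simp only [hgdef]
        rw [dif_neg hp]
      rw [h5, hval]

theorem mps_alt (hk : 1 ≤ k) (h1 : G1.adj = P1 k) (h2 : G2.adj = P2 k)
    (hm : IsMPS G1 G2 L) (π : Equiv.Perm (Fin (2*k-1))) (hsp : ScenPerm k L π) :
    IsAltPerm π := by
  have hlen := mps_length hk h1 h2 hm
  intro i h
  by_cases hp : i % 2 = 0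
  · rw [if_pos hp]
    set t := i/2 + 1 with htdef
    have hb1 : 2*t-2 < 2*k-1 := by omega
    have hb2 : 2*t-1 < 2*k-1 := by omega
    obtain ⟨hcb, hcc⟩ := hsp.1 t (by omega) (by omega) hb1
    obtain ⟨hjb, hjc⟩ := hsp.2 t (by omega) (by omega) hb2
    rw [hlen] at hcb hjb
    have habs : pr1 t ∉ AD L ((π ⟨2*t-1, hb2⟩ : Fin (2*k-1)) : ℕ) := by
      intro hmem
      have hj2 := hjc.2
      have hmem2 : pr2 t ∈ (L.getD (((π ⟨2*t-1, hb2⟩ : Fin (2*k-1)) : ℕ)+1) default).adj := by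
        rw [hj2]; exact Finset.mem_insert_self _ _
      have hmem1 : pr1 t ∈ (L.getD (((π ⟨2*t-1, hb2⟩ : Fin (2*k-1)) : ℕ)+1) default).adj := by
        rw [hj2]; exact Finset.mem_insert_of_mem hmem
      exact (L.getD (((π ⟨2*t-1, hb2⟩ : Fin (2*k-1)) : ℕ)+1) default).disj (pr2 t) hmem2
        (pr1 t) hmem1 (Ne.symm (pr1_ne_pr2 (by omega))) (2*t)
        (mem_pr2.mpr (Or.inl rfl)) (mem_pr1.mpr (Or.inr rfl))
    have hkey : ¬ (((π ⟨2*t-1, hb2⟩ : Fin (2*k-1)) : ℕ) ≤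
        ((π ⟨2*t-2, hb1⟩ : Fin (2*k-1)) : ℕ)) := fun hle =>
      habs ((pres_cut hk h1 h2 hm (by omega) (by omega) hcb hcc (by omega)).mpr hle)
    rw [show (⟨i, by omega⟩ : Fin (2*k-1)) = ⟨2*t-2, hb1⟩ from
        Fin.ext (by show i = 2*t-2; omega),
      show (⟨i+1, h⟩ : Fin (2*k-1)) = ⟨2*t-1, hb2⟩ from
        Fin.ext (by show i+1 = 2*t-1; omega),
      Fin.lt_def]
    omega
  · rw [if_neg hp]
    set t := (i+1)/2 with htdef
    have hb1 : 2*t-1 < 2*k-1 := by omega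
    have hb2 : 2*(t+1)-2 < 2*k-1 := by omega
    obtain ⟨hjb, hjc⟩ := hsp.2 t (by omega) (by omega) hb1
    obtain ⟨hcb, hcc⟩ := hsp.1 (t+1) (by omega) (by omega) hb2
    rw [hlen] at hcb hjb
    have habs : pr1 (t+1) ∉ AD L ((π ⟨2*t-1, hb1⟩ : Fin (2*k-1)) : ℕ) := by
      intro hmem
      have hj2 := hjc.2
      have hmem2 : pr2 t ∈ (L.getD (((π ⟨2*t-1, hb1⟩ : Fin (2*k-1)) : ℕ)+1) default).adj := by
        rw [hj2]; exact Finset.mem_insert_self _ _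
      have hmem1 : pr1 (t+1) ∈
          (L.getD (((π ⟨2*t-1, hb1⟩ : Fin (2*k-1)) : ℕ)+1) default).adj := by
        rw [hj2]; exact Finset.mem_insert_of_mem hmem
      exact (L.getD (((π ⟨2*t-1, hb1⟩ : Fin (2*k-1)) : ℕ)+1) default).disj (pr2 t) hmem2
        (pr1 (t+1)) hmem1 (Ne.symm (pr1_ne_pr2 (by omega))) (2*(t+1)-1)
        (mem_pr2.mpr (Or.inr (by omega))) (mem_pr1.mpr (Or.inl rfl))
    have hkey : ¬ (((π ⟨2*t-1, hb1⟩ : Fin (2*k-1)) : ℕ) ≤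
        ((π ⟨2*(t+1)-2, hb2⟩ : Fin (2*k-1)) : ℕ)) := fun hle =>
      habs ((pres_cut hk h1 h2 hm (by omega) (by omega) hcb hcc (by omega)).mpr hle)
    rw [show (⟨i, by omega⟩ : Fin (2*k-1)) = ⟨2*t-1, hb1⟩ from
        Fin.ext (by show i = 2*t-1; omega),
      show (⟨i+1, h⟩ : Fin (2*k-1)) = ⟨2*(t+1)-2, hb2⟩ from
        Fin.ext (by show i+1 = 2*(t+1)-2; omega),
      Fin.lt_def]
    omega


theorem mps_adj_eq (hk : 1 ≤ k) (h1 : G1.adj = P1 k) (h2 : G2.adj = P2 k)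
    (hm : IsMPS G1 G2 L) (π : Equiv.Perm (Fin (2*k-1))) (hsp : ScenPerm k L π)
    (i : ℕ) (hi : i ≤ 2*k-1) : AD L i = stA π i := by
  have hlen := mps_length hk h1 h2 hm
  ext q
  constructor
  · intro hq
    rcases Finset.mem_union.mp (AD_subset hk h1 h2 hm i hi hq) with hq1 | hq2
    · obtain ⟨t, ht1, ht2, rfl⟩ := mem_P1.mp hq1
      have hb : 2*t-2 < 2*k-1 := by omega
      obtain ⟨hcb, hcc⟩ := hsp.1 t ht1 ht2 hb
      rw [hlen] at hcb
      have hle : i ≤ ((π ⟨2*t-2, hb⟩ : Fin (2*k-1)) : ℕ) :=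
        (pres_cut hk h1 h2 hm ht1 ht2 hcb hcc hi).mp hq
      refine (mem_stA π).mpr (Or.inl ⟨t, ht1, ht2, ?_, rfl⟩)
      rw [show pv π (2*t-2) = ((π ⟨2*t-2, hb⟩ : Fin (2*k-1)) : ℕ) from by
        unfold pv; rw [dif_pos hb]]
      exact hle
    · obtain ⟨t, ht1, ht2, rfl⟩ := mem_P2.mp hq2
      have hb : 2*t-1 < 2*k-1 := by omega
      obtain ⟨hjb, hjc⟩ := hsp.2 t ht1 ht2 hb
      rw [hlen] at hjb
      have hlt : ((π ⟨2*t-1, hb⟩ : Fin (2*k-1)) : ℕ) < i :=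
        (pres_join hk h1 h2 hm ht1 ht2 hjb hjc hi).mp hq
      refine (mem_stA π).mpr (Or.inr ⟨t, ht1, ht2, ?_, rfl⟩)
      rw [show pv π (2*t-1) = ((π ⟨2*t-1, hb⟩ : Fin (2*k-1)) : ℕ) from by
        unfold pv; rw [dif_pos hb]]
      exact hlt
  · intro hq
    rcases (mem_stA π).mp hq with ⟨t, ht1, ht2, hle, rfl⟩ | ⟨t, ht1, ht2, hlt, rfl⟩
    · have hb : 2*t-2 < 2*k-1 := by omega
      obtain ⟨hcb, hcc⟩ := hsp.1 t ht1 ht2 hb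
      rw [hlen] at hcb
      refine (pres_cut hk h1 h2 hm ht1 ht2 hcb hcc hi).mpr ?_
      rw [show pv π (2*t-2) = ((π ⟨2*t-2, hb⟩ : Fin (2*k-1)) : ℕ) from by
        unfold pv; rw [dif_pos hb]] at hle
      exact hle
    · have hb : 2*t-1 < 2*k-1 := by omega
      obtain ⟨hjb, hjc⟩ := hsp.2 t ht1 ht2 hb
      rw [hlen] at hjb
      refine (pres_join hk h1 h2 hm ht1 ht2 hjb hjc hi).mpr ?_
      rw [show pv π (2*t-1) = ((π ⟨2*t-1, hb⟩ : Fin (2*k-1)) : ℕ) from by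
        unfold pv; rw [dif_pos hb]] at hlt
      exact hlt

theorem mps_eq_stL (hk : 1 ≤ k) (h1 : G1.adj = P1 k) (h2 : G2.adj = P2 k)
    (hm : IsMPS G1 G2 L) (π : Equiv.Perm (Fin (2*k-1))) (halt : IsAltPerm π)
    (hsp : ScenPerm k L π) : L = stL π hk halt := by
  have hlen := mps_length hk h1 h2 hm
  apply List.ext_getElem (by rw [hlen, stL_length])
  intro i hi1 hi2
  apply Genome.ext'
  have hADeq : L[i].adj = AD L i := by
    unfold AD
    rw [List.getD_eq_getElem _ _ hi1]
  rw [hADeq, mps_adj_eq hk h1 h2 hm π hsp i (by omega), stL_getElem π hk halt hi2]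
  rfl

end MPSAnalysis
end MShaped

/-- For the M-shaped path with `k ≥ 1` adjacencies in `G1`
(extremities `1, …, 2k`, `Π1 = {{2t-1, 2t} : 1 ≤ t ≤ k}`,
`Π2 = {{2t, 2t+1} : 1 ≤ t ≤ k-1}`), assigning to each most parsimonious SCJ scenario the
permutation recording the positions of its cut and join steps is a well-defined bijection
between the most parsimonious SCJ scenarios from `G1` to `G2` and the alternating
permutations of size `2k-1`. -/

theorem mShaped_bijection (k : ℕ) (hk : 1 ≤ k) (G1 G2 : Genome ℕ)
    (h1 : G1.adj = (Finset.Icc 1 k).image fun t => s(2 * t - 1, 2 * t))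
    (h2 : G2.adj = (Finset.Icc 1 (k - 1)).image fun t => s(2 * t, 2 * t + 1)) :
    (∀ L, IsMPS G1 G2 L →
      ∃! π : Equiv.Perm (Fin (2 * k - 1)), ScenPerm k L π) ∧
    (∀ L, IsMPS G1 G2 L → ∀ π : Equiv.Perm (Fin (2 * k - 1)),
      ScenPerm k L π → IsAltPerm π) ∧
    (∀ π : Equiv.Perm (Fin (2 * k - 1)), IsAltPerm π →
      ∃! L, IsMPS G1 G2 L ∧ ScenPerm k L π) := by
  have h1' : G1.adj = MShaped.P1 k := h1
  have h2' : G2.adj = MShaped.P2 k := h2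
  refine ⟨?_, ?_, ?_⟩
  · intro L hm
    obtain ⟨π, hsp, hu⟩ := MShaped.mps_scenperm hk h1' h2' hm
    exact ⟨π, hsp, hu⟩
  · intro L hm π hsp
    exact MShaped.mps_alt hk h1' h2' hm π hsp
  · intro π halt
    refine ⟨MShaped.stL π hk halt, ⟨MShaped.stL_mps π hk halt h1' h2',
      MShaped.stL_scenperm π hk halt⟩, ?_⟩
    rintro L' ⟨hm', hsp'⟩
    exact MShaped.mps_eq_stL hk h1' h2' hm' π halt hsp'
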